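/- Let κ be an uncountable cardinal with κ^{<κ} = κ and let G be a group of cardinality κ such that every group of cardinality at most κ is isomorphic to a subgroup of G, and every isomorphism between two subgroups of G each generated by strictly fewer than κ elements extends to an automorphism of G. Then Aut(G) is not universal: there exists a subgroup H of G, isomorphic to the free group on countably infinitely many generators, such that there is no injective continuous group homomorphism from the automorphism group Aut(H) of the group H into Aut(G). -/

import Mathlib

/-- The topology of pointwise convergence on the permutation group of a set `V`
(regarded as a discrete space): the topology induced from the product topology
on `V → V` where `V` carries the discrete topology. -/
instance permPointwiseTopology (V : Type*) : TopologicalSpace (Equiv.Perm V) :=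
  TopologicalSpace.induced (fun g : Equiv.Perm V => (g : V → V))
    (@Pi.topologicalSpace V (fun _ => V) (fun _ => ⊥))

/-- The topology of pointwise convergence on the automorphism group of a group `G`
(regarded as a discrete set): the topology induced from the product topology on `G → G`
where `G` carries the discrete topology. -/
instance mulAutPointwiseTopology (G : Type*) [Group G] : TopologicalSpace (MulAut G) :=
  TopologicalSpace.induced (fun g : MulAut G => (g : G → G))
    (@Pi.topologicalSpace G (fun _ => G) (fun _ => ⊥))

namespace RandomGroupAux

open Subgroup Function

universe u v

section Top

variable {N : Type v} [Group N]

lemma continuous_coeFn :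
    @Continuous _ _ _ (@Pi.topologicalSpace N (fun _ => N) (fun _ => ⊥))
      (fun σ : MulAut N => (σ : N → N)) :=
  continuous_induced_dom

lemma isOpen_stab (g : N) : IsOpen {σ : MulAut N | σ g = g} := by
  letI : TopologicalSpace N := ⊥
  haveI : DiscreteTopology N := ⟨rfl⟩
  have h1 : Continuous fun f : N → N => f g := continuous_apply g
  have h2 : IsOpen {f : N → N | f g = g} := by
    have : {f : N → N | f g = g} = (fun f : N → N => f g) ⁻¹' {g} := by
      ext f; simp
    rw [this]
    exact h1.isOpen_preimage _ (isOpen_discrete _)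
  exact continuous_coeFn.isOpen_preimage _ h2

lemma exists_finset_stab {V : Set (MulAut N)} (hV : IsOpen V) (h1 : (1 : MulAut N) ∈ V) :
    ∃ s : Finset N, {τ : MulAut N | ∀ x ∈ s, τ x = x} ⊆ V := by
  letI : TopologicalSpace N := ⊥
  obtain ⟨O, hO, hOV⟩ : ∃ O : Set (N → N), IsOpen O ∧
      (fun σ : MulAut N => (σ : N → N)) ⁻¹' O = V := isOpen_induced_iff.mp hV
  have hid : (fun σ : MulAut N => (σ : N → N)) 1 ∈ O := by
    rw [← Set.mem_preimage, hOV]; exact h1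
  obtain ⟨I, u, hu, hsub⟩ := isOpen_pi_iff.mp hO _ hid
  refine ⟨I, fun τ hτ => ?_⟩
  rw [← hOV]
  apply hsub
  intro x hx
  have h2 := (hu x hx).2
  show (τ : N → N) x ∈ u x
  have hfix : (τ : N → N) x = x := hτ x hx
  rw [hfix]
  simpa using h2

end Top

lemma freeGroup_countable {α : Type*} [Countable α] : Countable (FreeGroup α) := by
  classical
  exact FreeGroup.toWord_injective.countable

lemma mem_closure_iio (w : FreeGroup ℕ) :
    ∃ m : ℕ, w ∈ Subgroup.closure (FreeGroup.of '' Set.Iio m) := by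
  induction w using FreeGroup.induction_on with
  | C1 => exact ⟨0, one_mem _⟩
  | of x => exact ⟨x + 1, subset_closure ⟨x, by simp, rfl⟩⟩
  | inv_of x ih =>
      obtain ⟨m, hm⟩ := ih
      exact ⟨m, inv_mem hm⟩
  | mul x y hx hy =>
      obtain ⟨m₁, h₁⟩ := hx
      obtain ⟨m₂, h₂⟩ := hy
      refine ⟨max m₁ m₂, mul_mem ?_ ?_⟩
      · exact Subgroup.closure_mono (Set.image_mono (Set.Iio_subset_Iio (le_max_left _ _))) h₁
      · exact Subgroup.closure_mono (Set.image_mono (Set.Iio_subset_Iio (le_max_right _ _))) h₂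

lemma finset_mem_closure_iio (s : Finset (FreeGroup ℕ)) :
    ∃ m : ℕ, ∀ w ∈ s, w ∈ Subgroup.closure (FreeGroup.of '' Set.Iio m) := by
  classical
  induction s using Finset.induction_on with
  | empty => exact ⟨0, by simp⟩
  | @insert w t _ ih =>
      obtain ⟨m₁, hm₁⟩ := mem_closure_iio w
      obtain ⟨m₂, hm₂⟩ := ih
      refine ⟨max m₁ m₂, ?_⟩
      intro x hx
      rcases Finset.mem_insert.mp hx with rfl | hx
      · exact Subgroup.closure_mono (Set.image_mono (Set.Iio_subset_Iio (le_max_left _ _))) hm₁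
      · exact Subgroup.closure_mono (Set.image_mono (Set.Iio_subset_Iio (le_max_right _ _)))
          (hm₂ x hx)

/-- The homomorphism of `FreeGroup ℕ` inverting the `m`-th generator. -/
def flipHom (m : ℕ) : FreeGroup ℕ →* FreeGroup ℕ :=
  FreeGroup.lift fun i => if i = m then (FreeGroup.of i)⁻¹ else FreeGroup.of i

lemma flipHom_comp_self (m : ℕ) : (flipHom m).comp (flipHom m) = MonoidHom.id _ := by
  apply FreeGroup.ext_hom
  intro a
  by_cases h : a = m <;> simp [flipHom, FreeGroup.lift_apply_of, h]

/-- The automorphism of `FreeGroup ℕ` inverting the `m`-th generator. -/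
def flipAut (m : ℕ) : MulAut (FreeGroup ℕ) :=
  MonoidHom.toMulEquiv (flipHom m) (flipHom m) (flipHom_comp_self m) (flipHom_comp_self m)

lemma flipAut_of_ne {i m : ℕ} (h : i ≠ m) : flipAut m (FreeGroup.of i) = FreeGroup.of i := by
  show flipHom m (FreeGroup.of i) = FreeGroup.of i
  simp [flipHom, FreeGroup.lift_apply_of, h]

lemma flipAut_of_eq (m : ℕ) : flipAut m (FreeGroup.of m) = (FreeGroup.of m)⁻¹ := by
  show flipHom m (FreeGroup.of m) = (FreeGroup.of m)⁻¹
  simp [flipHom, FreeGroup.lift_apply_of]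

lemma of_ne_inv (m : ℕ) : (FreeGroup.of m)⁻¹ ≠ (FreeGroup.of m : FreeGroup ℕ) := by
  intro h
  have := congrArg FreeGroup.toWord h
  rw [FreeGroup.toWord_inv, FreeGroup.toWord_of] at this
  simp [FreeGroup.invRev] at this

/-- The shift endomorphism of `FreeGroup ℕ`. -/
def shiftHom : FreeGroup ℕ →* FreeGroup ℕ := FreeGroup.map Nat.succ

lemma shiftHom_injective : Function.Injective shiftHom := by
  have h : (FreeGroup.map Nat.pred).comp shiftHom = MonoidHom.id _ := by
    apply FreeGroup.ext_hom
    intro a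
    simp [shiftHom, FreeGroup.map.of]
  intro x y hxy
  have := congrArg (FreeGroup.map Nat.pred) hxy
  simpa [← MonoidHom.comp_apply, h] using this

/-- The isomorphism from the full free group to the image of the shift. -/
noncomputable def shiftIso : (⊤ : Subgroup (FreeGroup ℕ)) ≃* shiftHom.range :=
  Subgroup.topEquiv.trans (MonoidHom.ofInjective shiftHom_injective)

/-- An HNN extension of `FreeGroup ℕ` whose stable letter conjugates the whole
free group onto the image of the shift; it is generated by two elements. -/
abbrev BigD : Type := HNNExtension (FreeGroup ℕ) ⊤ shiftHom.range shiftIso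

/-- The embedding of `FreeGroup ℕ` in `BigD`. -/
noncomputable def bigψ : FreeGroup ℕ →* BigD := HNNExtension.of

lemma bigψ_injective : Function.Injective bigψ := HNNExtension.of_injective shiftIso

/-- First generator of `BigD`. -/
noncomputable def bigd₁ : BigD := bigψ (FreeGroup.of 0)

/-- Second generator of `BigD`. -/
noncomputable def bigd₂ : BigD := (HNNExtension.t : HNNExtension (FreeGroup ℕ) ⊤ shiftHom.range shiftIso)

lemma bigD_rel (w : FreeGroup ℕ) : bigψ (shiftHom w) = bigd₂ * bigψ w * bigd₂⁻¹ := by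
  have h : (HNNExtension.t : HNNExtension (FreeGroup ℕ) ⊤ shiftHom.range shiftIso) *
      HNNExtension.of w = HNNExtension.of (shiftHom w) * HNNExtension.t := by
    simpa [shiftIso, MonoidHom.ofInjective_apply] using
      HNNExtension.t_mul_of (φ := shiftIso) (⟨w, trivial⟩ : (⊤ : Subgroup (FreeGroup ℕ)))
  show (HNNExtension.of (shiftHom w) : HNNExtension (FreeGroup ℕ) ⊤ shiftHom.range shiftIso) =
    (HNNExtension.t : HNNExtension (FreeGroup ℕ) ⊤ shiftHom.range shiftIso) *
      HNNExtension.of w *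
      (HNNExtension.t : HNNExtension (FreeGroup ℕ) ⊤ shiftHom.range shiftIso)⁻¹
  rw [eq_mul_inv_iff_mul_eq]
  exact h.symm

lemma bigD_generated : Subgroup.closure ({bigd₁, bigd₂} : Set BigD) = ⊤ := by
  rw [eq_top_iff]
  intro x hx
  clear hx
  have hof : ∀ n : ℕ, bigψ (FreeGroup.of n) ∈ Subgroup.closure ({bigd₁, bigd₂} : Set BigD) := by
    intro n
    induction n with
    | zero => exact subset_closure (Set.mem_insert _ _)
    | succ k ih =>
        have hs : shiftHom (FreeGroup.of k) = FreeGroup.of (k + 1) := by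
          simp [shiftHom, FreeGroup.map.of]
        have := bigD_rel (FreeGroup.of k)
        rw [hs] at this
        rw [this]
        have ht : bigd₂ ∈ Subgroup.closure ({bigd₁, bigd₂} : Set BigD) :=
          subset_closure (Set.mem_insert_of_mem _ rfl)
        exact mul_mem (mul_mem ht ih) (inv_mem ht)
  have hbase : ∀ w : FreeGroup ℕ, bigψ w ∈ Subgroup.closure ({bigd₁, bigd₂} : Set BigD) := by
    intro w
    have hw : w ∈ Subgroup.closure (Set.range (FreeGroup.of : ℕ → FreeGroup ℕ)) := by
      rw [FreeGroup.closure_range_of]; trivial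
    induction hw using Subgroup.closure_induction with
    | mem x hx => obtain ⟨n, rfl⟩ := hx; exact hof n
    | one => simpa using one_mem _
    | mul x y hx hy ihx ihy => rw [map_mul]; exact mul_mem ihx ihy
    | inv x hx ihx => rw [map_inv]; exact inv_mem ihx
  induction x using HNNExtension.induction_on with
  | of g => exact hbase g
  | t => exact subset_closure (Set.mem_insert_of_mem _ rfl)
  | mul a b ha hb => exact mul_mem ha hb
  | inv a ha => exact inv_mem ha

noncomputable instance : Countable BigD := by
  haveI : Countable (FreeGroup ℕ) := freeGroup_countable
  haveI : Countable (FreeGroup Unit) := freeGroup_countable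
  haveI : Countable (Monoid.Coprod (FreeGroup ℕ) (Multiplicative ℤ)) := by
    haveI : Countable (FreeMonoid (FreeGroup ℕ ⊕ Multiplicative ℤ)) :=
      (FreeMonoid.toList (α := FreeGroup ℕ ⊕ Multiplicative ℤ)).injective.countable
    exact Monoid.Coprod.mk_surjective.countable
  exact (Con.mk'_surjective (c := HNNExtension.con (FreeGroup ℕ) ⊤ shiftHom.range shiftIso)).countable

section Chain

open Cardinal

universe w

lemma freeHom_range_eq_closure {G : Type w} [Group G] (f : FreeGroup ℕ →* G) :
    f.range = Subgroup.closure (Set.range fun n => f (FreeGroup.of n)) := by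
  have h : f = FreeGroup.lift fun n => f (FreeGroup.of n) := by
    apply FreeGroup.ext_hom; intro a; rw [FreeGroup.lift_apply_of]
  conv_lhs => rw [h]
  exact FreeGroup.range_lift_eq_closure

variable {G : Type u} [Group G]

lemma countable_mk_lt {κ : Cardinal.{u}} (hκ : Cardinal.aleph0 < κ) {S : Set G}
    (hS : S.Countable) : Cardinal.mk S < κ :=
  lt_of_le_of_lt (by haveI := hS.to_subtype; exact Cardinal.mk_le_aleph0) hκ

lemma conjure {κ : Cardinal.{u}}
    (hhom : ∀ A B : Subgroup G,
      (∃ S : Set G, Cardinal.mk S < κ ∧ Subgroup.closure S = A) →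
      (∃ S : Set G, Cardinal.mk S < κ ∧ Subgroup.closure S = B) →
      ∀ f : A ≃* B, ∃ g : MulAut G, ∀ a : A, g (a : G) = (f a : G))
    {B : Subgroup G} (hB : ∃ S : Set G, Cardinal.mk S < κ ∧ Subgroup.closure S = B)
    (ψ : ↥B →* G) (hinj : Function.Injective ψ)
    (hr : ∃ S : Set G, Cardinal.mk S < κ ∧ Subgroup.closure S = ψ.range) :
    ∃ σ : MulAut G, ∀ x : ↥B, σ (ψ x) = (x : G) := by
  obtain ⟨σ, hσ⟩ := hhom ψ.range B hr hB (MonoidHom.ofInjective hinj).symm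
  refine ⟨σ, fun x => ?_⟩
  have h1 := hσ (MonoidHom.ofInjective hinj x)
  rw [MonoidHom.ofInjective_apply] at h1
  rw [MulEquiv.symm_apply_apply] at h1
  exact h1

lemma chain_reaches_top {κ : Cardinal.{u}} (hκ : Cardinal.aleph0 < κ)
    (huniv : ∀ (H : Type u) [Group H], Cardinal.mk H ≤ κ →
      ∃ K : Subgroup G, Nonempty (H ≃* K))
    (hhom : ∀ A B : Subgroup G,
      (∃ S : Set G, Cardinal.mk S < κ ∧ Subgroup.closure S = A) →
      (∃ S : Set G, Cardinal.mk S < κ ∧ Subgroup.closure S = B) →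
      ∀ f : A ≃* B, ∃ g : MulAut G, ∀ a : A, g (a : G) = (f a : G))
    (C : ℕ → Subgroup G) (hmono : Monotone C) (hcover : ∀ g : G, ∃ n, g ∈ C n) :
    ∃ n, C n = ⊤ := by
  classical
  by_contra htop
  push_neg at htop
  have hbex : ∀ n, ∃ x : G, x ∉ C n := by
    intro n
    by_contra h
    push_neg at h
    exact htop n (by rw [eq_top_iff]; intro x _; exact h x)
  choose b hbn using hbex
  haveI hFcount : Countable (FreeGroup ℕ) := freeGroup_countable
  haveI hBcount : Countable ↥(Subgroup.closure (Set.range b)) := by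
    have h : (FreeGroup.lift b).range = Subgroup.closure (Set.range b) :=
      FreeGroup.range_lift_eq_closure
    rw [← h]
    exact (MonoidHom.rangeRestrict_surjective (FreeGroup.lift b)).countable
  haveI hEcount : Countable (Monoid.Coprod ↥(Subgroup.closure (Set.range b)) (FreeGroup ℕ)) := by
    haveI : Countable (FreeMonoid (↥(Subgroup.closure (Set.range b)) ⊕ FreeGroup ℕ)) :=
      (FreeMonoid.toList (α := ↥(Subgroup.closure (Set.range b)) ⊕ FreeGroup ℕ)).injective.countable
    exact Monoid.Coprod.mk_surjective.countable
  obtain ⟨K, ⟨ν⟩⟩ := huniv (Monoid.Coprod ↥(Subgroup.closure (Set.range b)) (FreeGroup ℕ))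
    (le_of_lt (lt_of_le_of_lt Cardinal.mk_le_aleph0 hκ))
  set μ : ↥(Subgroup.closure (Set.range b)) →* G :=
    K.subtype.comp (ν.toMonoidHom.comp Monoid.Coprod.inl) with hμdef
  have hμinj : Function.Injective μ :=
    K.subtype_injective.comp (ν.injective.comp Monoid.Coprod.inl_injective)
  have hBsmall : ∃ S : Set G, Cardinal.mk S < κ ∧
      Subgroup.closure S = Subgroup.closure (Set.range b) :=
    ⟨Set.range b, countable_mk_lt hκ (Set.countable_range b), rfl⟩
  have hμr : ∃ S : Set G, Cardinal.mk S < κ ∧ Subgroup.closure S = μ.range := by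
    refine ⟨μ '' (((↑) : ↥(Subgroup.closure (Set.range b)) → G) ⁻¹' Set.range b),
      countable_mk_lt hκ ((Set.to_countable _).image _), ?_⟩
    rw [← MonoidHom.map_closure, Subgroup.closure_closure_coe_preimage,
      ← MonoidHom.range_eq_map]
  obtain ⟨σ, hσ⟩ := conjure hhom hBsmall μ hμinj hμr
  -- build the free family avoiding the chain
  set c' : ℕ → ↥(Subgroup.closure (Set.range b)) := fun n =>
    if σ (K.subtype (ν (Monoid.Coprod.inr (FreeGroup.of n)))) ∈ C n
    then ⟨b n, Subgroup.subset_closure (Set.mem_range_self n)⟩ else 1 with hc'def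
  set Θ : Monoid.Coprod ↥(Subgroup.closure (Set.range b)) (FreeGroup ℕ) →*
      Monoid.Coprod ↥(Subgroup.closure (Set.range b)) (FreeGroup ℕ) :=
    Monoid.Coprod.lift Monoid.Coprod.inl
      (FreeGroup.lift fun n => Monoid.Coprod.inl (c' n) * Monoid.Coprod.inr (FreeGroup.of n))
    with hΘdef
  set Θ' : Monoid.Coprod ↥(Subgroup.closure (Set.range b)) (FreeGroup ℕ) →*
      Monoid.Coprod ↥(Subgroup.closure (Set.range b)) (FreeGroup ℕ) :=
    Monoid.Coprod.lift Monoid.Coprod.inl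
      (FreeGroup.lift fun n => (Monoid.Coprod.inl (c' n))⁻¹ * Monoid.Coprod.inr (FreeGroup.of n))
    with hΘ'def
  have hΘΘ' : Θ'.comp Θ = MonoidHom.id _ := by
    apply Monoid.Coprod.hom_ext
    · apply MonoidHom.ext
      intro x
      simp [hΘdef, hΘ'def, Monoid.Coprod.lift_apply_inl]
    · apply FreeGroup.ext_hom
      intro a
      simp [hΘdef, hΘ'def, Monoid.Coprod.lift_apply_inl, Monoid.Coprod.lift_apply_inr,
        FreeGroup.lift_apply_of, map_mul, map_inv, ← mul_assoc]
  have hΘinj : Function.Injective Θ := by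
    intro x y hxy
    have h2 := congrArg Θ' hxy
    simpa [← MonoidHom.comp_apply, hΘΘ'] using h2
  set Λ : FreeGroup ℕ →* G :=
    (MulEquiv.toMonoidHom (σ : MulAut G)).comp
      (K.subtype.comp (ν.toMonoidHom.comp (Θ.comp Monoid.Coprod.inr))) with hΛdef
  have hΛinj : Function.Injective Λ :=
    σ.injective.comp (K.subtype_injective.comp (ν.injective.comp
      (hΘinj.comp Monoid.Coprod.inr_injective)))
  have ha : ∀ n, Λ (FreeGroup.of n) ∉ C n := by
    intro n
    have hΛof : Λ (FreeGroup.of n) =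
        (c' n : G) * σ (K.subtype (ν (Monoid.Coprod.inr (FreeGroup.of n)))) := by
      show σ (K.subtype (ν (Θ (Monoid.Coprod.inr (FreeGroup.of n))))) = _
      have h1 : Θ (Monoid.Coprod.inr (FreeGroup.of n)) =
          Monoid.Coprod.inl (c' n) * Monoid.Coprod.inr (FreeGroup.of n) := by
        simp [hΘdef, Monoid.Coprod.lift_apply_inr, FreeGroup.lift_apply_of]
      rw [h1, map_mul, map_mul, map_mul]
      congr 1
      exact hσ (c' n)
    by_cases hy : σ (K.subtype (ν (Monoid.Coprod.inr (FreeGroup.of n)))) ∈ C n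
    · intro hmem
      rw [hΛof] at hmem
      have hc : (c' n : G) = b n := by
        simp only [hc'def]
        rw [if_pos hy]
      rw [hc] at hmem
      have h2 := mul_mem hmem (inv_mem hy)
      rw [mul_inv_cancel_right] at h2
      exact hbn n h2
    · intro hmem
      rw [hΛof] at hmem
      have hc : (c' n : G) = 1 := by
        simp only [hc'def]
        rw [if_neg hy, OneMemClass.coe_one]
      rw [hc, one_mul] at hmem
      exact hy hmem
  -- embed the free group `Λ.range` into a finitely generated subgroup
  obtain ⟨K₂, ⟨ν₂⟩⟩ := huniv (ULift.{u} BigD)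
    (le_of_lt (lt_of_le_of_lt Cardinal.mk_le_aleph0 hκ))
  set π : BigD →* G := K₂.subtype.comp (ν₂.toMonoidHom.comp MulEquiv.ulift.symm.toMonoidHom)
    with hπdef
  have hπinj : Function.Injective π :=
    K₂.subtype_injective.comp (ν₂.injective.comp MulEquiv.ulift.symm.injective)
  have hπK : ∀ w : BigD, π w ∈ K₂ := by
    intro w
    have h : π w = ((ν₂ (MulEquiv.ulift.symm w) : ↥K₂) : G) := rfl
    rw [h]
    exact SetLike.coe_mem _
  set μ₂ : FreeGroup ℕ →* G := π.comp bigψ with hμ₂def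
  have hμ₂inj : Function.Injective μ₂ := hπinj.comp bigψ_injective
  have hK₂gen : K₂ = Subgroup.closure ({π bigd₁, π bigd₂} : Set G) := by
    have h1 : (Subgroup.closure ({bigd₁, bigd₂} : Set BigD)).map π =
        Subgroup.closure (⇑π '' {bigd₁, bigd₂}) := MonoidHom.map_closure π _
    rw [bigD_generated, ← MonoidHom.range_eq_map] at h1
    have h2 : π.range = K₂ := by
      apply le_antisymm
      · rintro x ⟨w, rfl⟩
        exact hπK w
      · intro x hx
        exact ⟨MulEquiv.ulift (ν₂.symm ⟨x, hx⟩), by simp [hπdef]⟩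
    rw [h2] at h1
    rw [h1]
    congr 1
    simp [Set.image_insert_eq]
  have hAsmall : ∃ S : Set G, Cardinal.mk S < κ ∧ Subgroup.closure S = Λ.range :=
    ⟨Set.range fun n => Λ (FreeGroup.of n), countable_mk_lt hκ (Set.countable_range _),
      (freeHom_range_eq_closure Λ).symm⟩
  have hA₂small : ∃ S : Set G, Cardinal.mk S < κ ∧ Subgroup.closure S = μ₂.range :=
    ⟨Set.range fun n => μ₂ (FreeGroup.of n), countable_mk_lt hκ (Set.countable_range _),
      (freeHom_range_eq_closure μ₂).symm⟩
  set ψ₂ : ↥Λ.range →* G := μ₂.comp (MonoidHom.ofInjective hΛinj).symm.toMonoidHom with hψ₂def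
  have hψ₂inj : Function.Injective ψ₂ :=
    hμ₂inj.comp (MonoidHom.ofInjective hΛinj).symm.injective
  have hψ₂range : ψ₂.range = μ₂.range := by
    apply le_antisymm
    · rintro x ⟨u, rfl⟩
      exact ⟨(MonoidHom.ofInjective hΛinj).symm u, rfl⟩
    · rintro x ⟨w, rfl⟩
      refine ⟨MonoidHom.ofInjective hΛinj w, ?_⟩
      show μ₂ ((MonoidHom.ofInjective hΛinj).symm ((MonoidHom.ofInjective hΛinj) w)) = μ₂ w
      rw [MulEquiv.symm_apply_apply]
  have hA₂small' : ∃ S : Set G, Cardinal.mk S < κ ∧ Subgroup.closure S = ψ₂.range := by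
    obtain ⟨S, h1, h2⟩ := hA₂small
    exact ⟨S, h1, h2.trans hψ₂range.symm⟩
  obtain ⟨σ₂, hσ₂⟩ := conjure hhom hAsmall ψ₂ hψ₂inj hA₂small'
  have key : ∀ x : ↥Λ.range, σ₂.symm (x : G) ∈ K₂ := by
    intro x
    have h1 : σ₂.symm ((x : G)) = ψ₂ x := by
      rw [← hσ₂ x, MulEquiv.symm_apply_apply]
    rw [h1]
    have h2 : ψ₂ x = π (bigψ ((MonoidHom.ofInjective hΛinj).symm x)) := rfl
    rw [h2]
    exact hπK _
  obtain ⟨n₁, h₁⟩ := hcover (σ₂ (π bigd₁))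
  obtain ⟨n₂, h₂⟩ := hcover (σ₂ (π bigd₂))
  have hle : Subgroup.closure ({σ₂ (π bigd₁), σ₂ (π bigd₂)} : Set G) ≤ C (max n₁ n₂) := by
    rw [Subgroup.closure_le]
    intro x hx
    rcases hx with h | h
    · rw [h]; exact hmono (le_max_left n₁ n₂) h₁
    · rw [Set.mem_singleton_iff] at h
      rw [h]; exact hmono (le_max_right n₁ n₂) h₂
  have hmem : Λ (FreeGroup.of (max n₁ n₂)) ∈ C (max n₁ n₂) := by
    have hx : Λ (FreeGroup.of (max n₁ n₂)) ∈ Λ.range := ⟨FreeGroup.of (max n₁ n₂), rfl⟩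
    have h3 : σ₂.symm (Λ (FreeGroup.of (max n₁ n₂))) ∈ K₂ := key ⟨_, hx⟩
    rw [hK₂gen] at h3
    have h4 : Λ (FreeGroup.of (max n₁ n₂)) ∈
        (Subgroup.closure ({π bigd₁, π bigd₂} : Set G)).map (MulEquiv.toMonoidHom (σ₂ : MulAut G)) :=
      ⟨σ₂.symm (Λ (FreeGroup.of (max n₁ n₂))), h3, by simp⟩
    rw [MonoidHom.map_closure] at h4
    have h5 : (⇑(MulEquiv.toMonoidHom (σ₂ : MulAut G))) '' {π bigd₁, π bigd₂} =
        ({σ₂ (π bigd₁), σ₂ (π bigd₂)} : Set G) := by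
      simp [Set.image_insert_eq]
    rw [h5] at h4
    exact hle h4
  exact ha (max n₁ n₂) hmem

end Chain

end RandomGroupAux

open Cardinal in
/-- Let `κ` be an uncountable cardinal with `κ^{<κ} = κ` and let `G` be a group of
cardinality `κ` such that every group of cardinality at most `κ` is isomorphic to a
subgroup of `G` and every isomorphism between two subgroups of `G`, each generated by
strictly fewer than `κ` elements, extends to an automorphism of `G`. Then `Aut(G)` is not
universal: there is a subgroup `H ≤ G`, isomorphic to the free group on countably many
generators, such that there is no injective continuous group homomorphism from `Aut(H)`
into `Aut(G)` (both with the pointwise convergence topology). -/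
theorem randomGroupAut_not_universal
    {G : Type u} [Group G] (κ : Cardinal.{u})
    (hκ : Cardinal.aleph0 < κ) (hpow : κ ^< κ = κ)
    (hcard : #G = κ)
    (huniv : ∀ (H : Type u) [Group H], #H ≤ κ →
      ∃ K : Subgroup G, Nonempty (H ≃* K))
    (hhom : ∀ A B : Subgroup G,
      (∃ S : Set G, #S < κ ∧ Subgroup.closure S = A) →
      (∃ S : Set G, #S < κ ∧ Subgroup.closure S = B) →
      ∀ f : A ≃* B, ∃ g : MulAut G, ∀ a : A, g (a : G) = (f a : G)) :
    ∃ H : Subgroup G, Nonempty (H ≃* FreeGroup ℕ) ∧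
      ¬ ∃ e : MulAut H →* MulAut G,
          Function.Injective e ∧ Continuous e := by

  classical
  haveI : Countable (FreeGroup ℕ) := RandomGroupAux.freeGroup_countable
  obtain ⟨H, ⟨νH⟩⟩ := huniv (ULift.{u} (FreeGroup ℕ))
    (le_of_lt (lt_of_le_of_lt Cardinal.mk_le_aleph0 hκ))
  set ι : ↥H ≃* FreeGroup ℕ := νH.symm.trans MulEquiv.ulift with hιdef
  refine ⟨H, ⟨ι⟩, ?_⟩
  rintro ⟨e, einj, econt⟩
  set hgen : ℕ → ↥H := fun i => ι.symm (FreeGroup.of i) with hgendef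
  set C : ℕ → Subgroup G := fun m =>
    { carrier := {g | ∀ τ : MulAut ↥H, (∀ i < m, τ (hgen i) = hgen i) → e τ g = g}
      one_mem' := fun {τ} _ => map_one _
      mul_mem' := by
        intro x y hx hy τ hτ
        rw [map_mul, hx τ hτ, hy τ hτ]
      inv_mem' := by
        intro x hx τ hτ
        rw [map_inv, hx τ hτ] } with hCdef
  have hmono : Monotone C := by
    intro m m' hmm' g hg τ hτ
    exact hg τ (fun i hi => hτ i (lt_of_lt_of_le hi hmm'))
  have hcover : ∀ g : G, ∃ n, g ∈ C n := by
    intro g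
    have hopen : IsOpen ((⇑e) ⁻¹' {σ : MulAut G | σ g = g}) :=
      (RandomGroupAux.isOpen_stab g).preimage econt
    have h1 : (1 : MulAut ↥H) ∈ (⇑e) ⁻¹' {σ : MulAut G | σ g = g} := by
      show e 1 g = g
      rw [map_one]
      rfl
    obtain ⟨s, hs⟩ := RandomGroupAux.exists_finset_stab hopen h1
    obtain ⟨m, hm⟩ := RandomGroupAux.finset_mem_closure_iio (s.image ι)
    refine ⟨m, ?_⟩
    intro τ hτ
    have hfix : ∀ x ∈ s, τ x = x := by
      intro x hx
      set F : Subgroup ↥H :=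
        { carrier := {y | τ y = y}
          one_mem' := map_one τ
          mul_mem' := by
            intro a b ha hb
            rw [Set.mem_setOf_eq] at ha hb
            show τ (a * b) = a * b
            rw [map_mul, ha, hb]
          inv_mem' := by
            intro a ha
            rw [Set.mem_setOf_eq] at ha
            show τ a⁻¹ = a⁻¹
            rw [map_inv, ha] } with hFdef
      have hsubset : ⇑ι.symm.toMonoidHom '' (FreeGroup.of '' Set.Iio m) ⊆ (F : Set ↥H) := by
        rintro _ ⟨_, ⟨i, hi, rfl⟩, rfl⟩
        exact hτ i hi
      have hxmem : ι x ∈ Subgroup.closure (FreeGroup.of '' Set.Iio m) :=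
        hm (ι x) (Finset.mem_image_of_mem ι hx)
      have hmem2 : x ∈ (Subgroup.closure (FreeGroup.of '' Set.Iio m)).map ι.symm.toMonoidHom :=
        ⟨ι x, hxmem, by simp⟩
      rw [MonoidHom.map_closure] at hmem2
      exact (Subgroup.closure_le F).mpr hsubset hmem2
    exact hs hfix
  have hproper : ∀ m, C m ≠ ⊤ := by
    intro m htopm
    set τm : MulAut ↥H := (ι.trans (RandomGroupAux.flipAut m)).trans ι.symm with hτmdef
    have hτmfix : ∀ i < m, τm (hgen i) = hgen i := by
      intro i hi
      show ι.symm ((RandomGroupAux.flipAut m) (ι (ι.symm (FreeGroup.of i)))) = _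
      rw [MulEquiv.apply_symm_apply, RandomGroupAux.flipAut_of_ne (Nat.ne_of_lt hi)]
    have hτmne : τm ≠ 1 := by
      intro h
      have h2 : τm (hgen m) = hgen m := by rw [h]; rfl
      have h3 : τm (hgen m) = (hgen m)⁻¹ := by
        show ι.symm ((RandomGroupAux.flipAut m) (ι (ι.symm (FreeGroup.of m)))) = _
        rw [MulEquiv.apply_symm_apply, RandomGroupAux.flipAut_of_eq, map_inv]
      rw [h3] at h2
      have h4 := congrArg ι h2
      rw [map_inv, MulEquiv.apply_symm_apply] at h4
      exact RandomGroupAux.of_ne_inv m h4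
    have heτm : e τm ≠ 1 := by
      intro h
      exact hτmne (einj (by rw [h, map_one]))
    obtain ⟨g₀, hg₀⟩ : ∃ g₀ : G, e τm g₀ ≠ g₀ := by
      by_contra hall
      push_neg at hall
      apply heτm
      apply DFunLike.ext
      intro z
      rw [hall z]
      rfl
    have hgm : g₀ ∈ C m := htopm ▸ Subgroup.mem_top g₀
    exact hg₀ (hgm τm hτmfix)
  obtain ⟨n, hn⟩ := RandomGroupAux.chain_reaches_top hκ huniv hhom C hmono hcover
  exact hproper n hn
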